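/- arXiv:2210.00205 — 2 statements merged into one kernel-verified Lean document; each statement's English description precedes it below -/
import Mathlib

section
/- Let X and Y be Hausdorff spaces, τ : X → X a fixed-point free continuous involution, and suppose Emb(Y) < ∞. If secat(q : X → X/τ) > Emb(Y), then the triple ((X,τ);Y) satisfies the Borsuk–Ulam property. -/
open Metric Set

/-- A continuous local section of `p` over `U`. -/
def IsLocalSection {E B : Type*} [TopologicalSpace E] [TopologicalSpace B]
    (p : E → B) (U : Set B) : Prop :=
  ∃ s : U → E, Continuous s ∧ ∀ x : U, p (s x) = (x : B)

/-- The sectional category of a map `p : E → B`: the least number of open sets covering `B`,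
over each of which `p` admits a continuous local section; `⊤` if no finite cover exists. -/
noncomputable def secat {E B : Type*} [TopologicalSpace E] [TopologicalSpace B]
    (p : E → B) : ℕ∞ :=
  sInf {n : ℕ∞ | ∃ k : ℕ, n = (k : ℕ∞) ∧ ∃ U : Fin k → Set B,
    (∀ i, IsOpen (U i)) ∧ (⋃ i, U i) = Set.univ ∧ ∀ i, IsLocalSection p (U i)}

/-- A subset is contractible within the ambient space if its inclusion is nullhomotopic. -/
def ContractibleIn {X : Type*} [TopologicalSpace X] (U : Set X) : Prop :=
  ContinuousMap.Nullhomotopic (⟨(Subtype.val : U → X), continuous_subtype_val⟩ : C(U, X))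

/-- Lusternik–Schnirelmann category: least number of open sets covering `X`, each
contractible within `X`. -/
noncomputable def LScat (X : Type*) [TopologicalSpace X] : ℕ∞ :=
  sInf {n : ℕ∞ | ∃ k : ℕ, n = (k : ℕ∞) ∧ ∃ U : Fin k → Set X,
    (∀ i, IsOpen (U i)) ∧ (⋃ i, U i) = Set.univ ∧ ∀ i, ContractibleIn (U i)}

/-- Hurewicz fibration: the homotopy lifting property with respect to all spaces. -/
def IsHurewiczFibration {E B : Type*} [TopologicalSpace E] [TopologicalSpace B]
    (p : E → B) : Prop :=
  ∀ (Z : Type*) [TopologicalSpace Z] (H : Z × unitInterval → B) (h : Z → E),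
    Continuous H → Continuous h → (∀ z, p (h z) = H (z, 0)) →
    ∃ G : Z × unitInterval → E, Continuous G ∧ (∀ z, G (z, 0) = h z) ∧ ∀ w, p (G w) = H w

/-- The orbit relation of the action generated by a map `τ`. -/
def orbitRelOf {X : Type*} (τ : X → X) : X → X → Prop := fun x y => y = τ x

/-- Quotient of `X` by the (involutive) map `τ`, with the quotient topology. -/
abbrev InvolQuot {X : Type*} [TopologicalSpace X] (τ : X → X) : Type _ := Quot (orbitRelOf τ)

/-- The quotient map `X → X/τ`. -/
def involQuotMk {X : Type*} [TopologicalSpace X] (τ : X → X) : X → InvolQuot τ :=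
  Quot.mk (orbitRelOf τ)

/-- The ordered configuration space `F(Y,2)` of two distinct points of `Y`. -/
abbrev Conf2 (Y : Type*) [TopologicalSpace Y] : Type _ := {p : Y × Y // p.1 ≠ p.2}

/-- The swap involution `τ₂` on `F(Y,2)`. -/
def confSwap {Y : Type*} [TopologicalSpace Y] : Conf2 Y → Conf2 Y :=
  fun p => ⟨(p.1.2, p.1.1), Ne.symm p.2⟩

/-- The unordered configuration space `D(Y,2) = F(Y,2)/τ₂`. -/
abbrev UConf2 (Y : Type*) [TopologicalSpace Y] : Type _ := InvolQuot (confSwap (Y := Y))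

/-- The quotient double covering `q^Y : F(Y,2) → D(Y,2)`. -/
def confQuotMk (Y : Type*) [TopologicalSpace Y] : Conf2 Y → UConf2 Y :=
  involQuotMk confSwap

/-- The Borsuk–Ulam property for the triple `((X,τ);Y)`. -/
def BorsukUlamProperty (X : Type*) [TopologicalSpace X] (τ : X → X)
    (Y : Type*) [TopologicalSpace Y] : Prop :=
  ∀ f : X → Y, Continuous f → ∃ x : X, f (τ x) = f x

/-- The `m`-sphere as the unit sphere of `ℝ^{m+1}`. -/
abbrev Sph (m : ℕ) : Type := Metric.sphere (0 : EuclideanSpace ℝ (Fin (m + 1))) 1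

/-- The antipodal involution on the sphere. -/
noncomputable def antipodal (m : ℕ) : Sph m → Sph m := fun x => -x

/-- The smallest dimension of a Euclidean space into which `Y` embeds. -/
noncomputable def embDim (Y : Type*) [TopologicalSpace Y] : ℕ∞ :=
  sInf {n : ℕ∞ | ∃ k : ℕ, n = (k : ℕ∞) ∧
    ∃ e : Y → EuclideanSpace ℝ (Fin k), Topology.IsEmbedding e}

/-- The `ℤ/2`-index of `(X,τ)`: the least `n` such that there is a continuous map
`X → Sⁿ` which is equivariant for `τ` and the antipodal involution. -/
noncomputable def z2Index {X : Type*} [TopologicalSpace X] (τ : X → X) : ℕ∞ :=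
  sInf {n : ℕ∞ | ∃ k : ℕ, n = (k : ℕ∞) ∧
    ∃ g : X → Sph k, Continuous g ∧ ∀ x, g (τ x) = antipodal k (g x)}

section CW

/-- A (classical) CW-complex structure on a Hausdorff space `X`: a family of cells
with characteristic maps from closed disks, the images of the open disks partitioning `X`,
each attaching map sending the boundary sphere into cells of lower dimension, together with
closure finiteness (C) and the weak topology (W). -/
structure CWStructure (X : Type u) [TopologicalSpace X] : Type (u + 1) where
  /-- index type of the `n`-cells -/
  cell : ℕ → Type u
  /-- characteristic map of each `n`-cell -/
  map : (n : ℕ) → cell n → EuclideanSpace ℝ (Fin n) → X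
  continuousOn : ∀ n i, ContinuousOn (map n i) (closedBall 0 1)
  injOn : ∀ n i, Set.InjOn (map n i) (ball 0 1)
  partition : ∀ x : X, ∃! p : Σ n, cell n, x ∈ map p.1 p.2 '' ball 0 1
  mapsTo_boundary : ∀ n i, Set.MapsTo (map n i) (sphere 0 1)
    (⋃ (m : ℕ) (_ : m < n) (j : cell m), map m j '' closedBall 0 1)
  closureFinite : ∀ n i, {p : Σ m, cell m |
    (map p.1 p.2 '' ball 0 1 ∩ map n i '' closedBall 0 1).Nonempty}.Finite
  weakTopology : ∀ A : Set X,
    (∀ n i, IsClosed (A ∩ map n i '' closedBall 0 1)) → IsClosed A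

namespace CWStructure

variable {X : Type u} [TopologicalSpace X] (S : CWStructure X)

/-- The `n`-skeleton of a CW structure. -/
def skeleton (n : ℕ) : Set X :=
  ⋃ (m : ℕ) (_ : m ≤ n) (j : S.cell m), S.map m j '' closedBall 0 1

/-- The CW structure has dimension at most `d`. -/
def DimLE (d : ℕ) : Prop := ∀ n, d < n → IsEmpty (S.cell n)

/-- The CW structure has dimension exactly `d`. -/
def DimEq (d : ℕ) : Prop := S.DimLE d ∧ Nonempty (S.cell d)

/-- A self-map is cellular if it maps each skeleton into itself. -/
def Cellular (f : X → X) : Prop := ∀ n, Set.MapsTo f (S.skeleton n) (S.skeleton n)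

end CWStructure

/-- The homotopical dimension of `X` is at most `d`: `X` is homotopy equivalent to a
CW complex of dimension at most `d`. -/
def HDimLE (X : Type u) [TopologicalSpace X] (d : ℕ) : Prop :=
  ∃ (Z : Type u) (_ : TopologicalSpace Z) (S : CWStructure Z),
    S.DimLE d ∧ Nonempty (ContinuousMap.HomotopyEquiv Z X)

end CW

lemma involQuot_mk_eq_iff {X : Type*} [TopologicalSpace X] {τ : X → X}
    (hτ : Function.Involutive τ) (x y : X) :
    involQuotMk τ x = involQuotMk τ y ↔ x = y ∨ y = τ x := by
  constructor
  · intro hxy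
    have hgen : Relation.EqvGen (orbitRelOf τ) x y := Quot.eq.mp hxy
    clear hxy
    induction hgen with
    | rel a b hab => exact Or.inr hab
    | refl a => exact Or.inl rfl
    | symm a b _ ih =>
        rcases ih with h | h
        · exact Or.inl h.symm
        · exact Or.inr (by rw [h, hτ])
    | trans a b c _ _ ih1 ih2 =>
        rcases ih1 with h1 | h1 <;> rcases ih2 with h2 | h2
        · exact Or.inl (h1.trans h2)
        · exact Or.inr (by rw [h2, h1])
        · exact Or.inr (by rw [← h2, h1])
        · exact Or.inl (by rw [h2, h1, hτ])
  · rintro (rfl | rfl)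
    · rfl
    · exact Quot.sound rfl

lemma involQuot_isOpenMap {X : Type*} [TopologicalSpace X] {τ : X → X}
    (hc : Continuous τ) (hτ : Function.Involutive τ) :
    IsOpenMap (involQuotMk τ) := by
  intro W hW
  have hpre : involQuotMk τ ⁻¹' (involQuotMk τ '' W) = W ∪ τ ⁻¹' W := by
    ext x
    simp only [Set.mem_preimage, Set.mem_image, Set.mem_union]
    constructor
    · rintro ⟨w, hw, hwx⟩
      rcases (involQuot_mk_eq_iff hτ w x).mp hwx with rfl | rfl
      · exact Or.inl hw
      · exact Or.inr (by simpa [hτ w] using hw)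
    · rintro (hx | hx)
      · exact ⟨x, hx, rfl⟩
      · exact ⟨τ x, hx, ((involQuot_mk_eq_iff hτ x (τ x)).mpr (Or.inr rfl)).symm⟩
  have : IsOpen (involQuotMk τ ⁻¹' (involQuotMk τ '' W)) := by
    rw [hpre]; exact hW.union (hW.preimage hc)
  exact isOpen_coinduced.mpr this

/-- if `Y` embeds in some Euclidean space and
`secat (q : X → X/τ) > Emb(Y)`, then `((X,τ);Y)` satisfies the BUP. -/
theorem stmt_10 {X Y : Type*} [TopologicalSpace X] [TopologicalSpace Y]
    [T2Space X] [T2Space Y] (τ : X → X) (hτc : Continuous τ)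
    (hτinv : Function.Involutive τ) (hτfree : ∀ x, τ x ≠ x)
    (hEmb : embDim Y < ⊤)
    (h : embDim Y < secat (involQuotMk τ)) :
    BorsukUlamProperty X τ Y := by
  intro f hf
  by_contra hcon
  push_neg at hcon
  -- extract a finite embedding dimension below secat
  obtain ⟨a, haS, halt⟩ := sInf_lt_iff.mp h
  obtain ⟨k, rfl, e, he⟩ := haS
  set q : X → InvolQuot τ := involQuotMk τ with hq_def
  have hqc : Continuous q := continuous_quot_mk
  have hqopen : IsOpenMap q := involQuot_isOpenMap hτc hτinv
  -- the odd nowhere-zero map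
  set g : X → EuclideanSpace ℝ (Fin k) := fun x => e (f x) - e (f (τ x)) with hg_def
  have hg : Continuous g :=
    (he.continuous.comp hf).sub (he.continuous.comp (hf.comp hτc))
  have godd : ∀ x, g (τ x) = -g x := by
    intro x
    simp only [hg_def, hτinv x]
    exact (neg_sub _ _).symm
  have gne : ∀ x, g x ≠ 0 := by
    intro x hx
    exact hcon x (he.injective (by simpa [hg_def, sub_eq_zero] using hx)).symm
  have gcoord : ∀ i : Fin k, Continuous fun x => g x i :=
    fun i => (continuous_apply i).comp ((PiLp.continuous_ofLp (p := 2) (β := fun _ : Fin k => ℝ)).comp hg)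
  have goddc : ∀ (x : X) (i : Fin k), g (τ x) i = -(g x i) := by
    intro x i; rw [godd x]; rfl
  -- the open cover of the quotient
  set U : Fin k → Set (InvolQuot τ) := fun i => q '' {x | g x i ≠ 0} with hU_def
  have hUopen : ∀ i, IsOpen (U i) := by
    intro i
    exact hqopen _ ((isOpen_compl_singleton (x := (0 : ℝ))).preimage (gcoord i))
  have hUcover : (⋃ i, U i) = Set.univ := by
    ext u
    simp only [Set.mem_iUnion, Set.mem_univ, iff_true]
    obtain ⟨x, rfl⟩ := Quot.exists_rep u
    have : ∃ i, g x i ≠ 0 := by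
      by_contra hall
      push_neg at hall
      exact gne x (by ext i; exact hall i)
    obtain ⟨i, hi⟩ := this
    exact ⟨i, x, hi, rfl⟩
  have hsec : ∀ i, IsLocalSection q (U i) := by
    intro i
    set W : Set X := {x | 0 < g x i} with hW_def
    have hWopen : IsOpen W := isOpen_lt continuous_const (gcoord i)
    have himg : ∀ x : W, q (x : X) ∈ U i := fun x => ⟨x, ne_of_gt x.2, rfl⟩
    let φ : W → ↥(U i) := fun x => ⟨q (x : X), himg x⟩
    have hφc : Continuous φ := Continuous.subtype_mk (hqc.comp continuous_subtype_val) _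
    have hφinj : Function.Injective φ := by
      rintro ⟨x, hx⟩ ⟨y, hy⟩ hxy
      have hq : q x = q y := congrArg Subtype.val hxy
      rcases (involQuot_mk_eq_iff hτinv x y).mp hq with rfl | rfl
      · rfl
      · exfalso
        have h1 : (0:ℝ) < g x i := hx
        have h2 : (0:ℝ) < -(g x i) := by rw [← goddc x i]; exact hy
        linarith
    have hφsurj : Function.Surjective φ := by
      rintro ⟨u, hu⟩
      obtain ⟨x, hx, rfl⟩ := hu
      rcases lt_or_gt_of_ne hx with hneg | hpos
      · refine ⟨⟨τ x, ?_⟩, ?_⟩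
        · show 0 < g (τ x) i
          rw [goddc x i]; linarith
        · apply Subtype.ext
          exact ((involQuot_mk_eq_iff hτinv x (τ x)).mpr (Or.inr rfl)).symm
      · exact ⟨⟨x, hpos⟩, rfl⟩
    have hφopen : IsOpenMap φ := by
      have hcomp : IsOpenMap ((Subtype.val : ↥(U i) → InvolQuot τ) ∘ φ) := by
        have : (Subtype.val : ↥(U i) → InvolQuot τ) ∘ φ
            = q ∘ (Subtype.val : W → X) := rfl
        rw [this]
        exact hqopen.comp hWopen.isOpenMap_subtype_val
      intro O hO
      have h1 : IsOpen (Subtype.val '' (φ '' O)) := by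
        rw [← Set.image_comp]; exact hcomp O hO
      have h2 : Subtype.val ⁻¹' (Subtype.val '' (φ '' O)) = φ '' O :=
        Set.preimage_image_eq _ Subtype.val_injective
      rw [← h2]
      exact h1.preimage continuous_subtype_val
    let ψ : W ≃ₜ ↥(U i) :=
      Equiv.toHomeomorphOfContinuousOpen (Equiv.ofBijective φ ⟨hφinj, hφsurj⟩) hφc hφopen
    refine ⟨fun u => ((ψ.symm u : W) : X), continuous_subtype_val.comp ψ.symm.continuous, ?_⟩
    intro u
    have : φ (ψ.symm u) = u := ψ.apply_symm_apply u
    exact congrArg Subtype.val this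
  have hle : secat q ≤ (k : ℕ∞) :=
    sInf_le ⟨k, rfl, U, hUopen, hUcover, hsec⟩
  exact absurd (hle.trans_lt halt) (lt_irrefl _)
end

section
/- Let M be a connected m-dimensional CW complex with a fixed-point free cellular involution τ, and let q : M → M/τ be the quotient double covering. If secat(q) = m + 1, then the ℤ/2-index of (M,τ) equals m; that is, ((M,τ); ℝ^m) satisfies the Borsuk–Ulam property. -/
open Metric Set

universe u

section Ext
variable {E : Type*} [MetricSpace E]

lemma ext_lemma {k : ℕ} (A : Set E) (hA : IsClosed A)
    (B : Set E) (W : Fin k → Set E) (hW : ∀ j, IsOpen (W j)) (hcov : B ⊆ ⋃ j, W j)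
    (φ : E → Fin k → ℝ) (hφc : ContinuousOn φ A)
    (hφ01 : ∀ z ∈ A, ∀ j, φ z j ∈ Icc (0:ℝ) 1)
    (hφz : ∀ z ∈ A, ∀ j, z ∉ W j → φ z j = 0)
    (hφp : ∀ z ∈ A, ∃ j, 0 < φ z j) :
    ∃ H : E → Fin k → ℝ, Continuous H ∧ (∀ z ∈ A, H z = φ z) ∧
      (∀ z, ∀ j, H z j ∈ Icc (0:ℝ) 1) ∧ (∀ z, ∀ j, z ∉ W j → H z j = 0) ∧
      (∀ z ∈ B, ∃ j, 0 < H z j) := by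
  classical
  -- auxiliary distance functions
  classical
  set u : Fin k → E → ℝ := fun j z =>
    if ((W j)ᶜ).Nonempty then infDist z (W j)ᶜ else 1 with hu_def
  have hu_cont : ∀ j, Continuous (u j) := by
    intro j
    by_cases hj : ((W j)ᶜ).Nonempty
    · simpa [hu_def, hj] using continuous_infDist_pt ((W j)ᶜ)
    · simpa [hu_def, hj] using continuous_const
  have hu_nonneg : ∀ j z, 0 ≤ u j z := by
    intro j z; rw [hu_def]; dsimp only; split
    · exact infDist_nonneg
    · norm_num
  have hu_zero : ∀ j z, z ∉ W j → u j z = 0 := by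
    intro j z hz; rw [hu_def]; dsimp only
    rw [if_pos ⟨z, hz⟩]
    exact infDist_zero_of_mem hz
  have hu_pos : ∀ j z, z ∈ W j → 0 < u j z := by
    intro j z hz; rw [hu_def]; dsimp only; split
    next hj => exact ((hW j).isClosed_compl.notMem_iff_infDist_pos hj).mp (by simpa using hz)
    next hj => norm_num
  set D : E → ℝ := fun z => if A.Nonempty then infDist z A else 1 with hD_def
  have hD_cont : Continuous D := by
    by_cases hA' : A.Nonempty
    · simpa [hD_def, hA'] using continuous_infDist_pt A
    · simpa [hD_def, hA'] using continuous_const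
  have hD_nonneg : ∀ z, 0 ≤ D z := by
    intro z; rw [hD_def]; dsimp only; split
    · exact infDist_nonneg
    · norm_num
  have hD_zero : ∀ z ∈ A, D z = 0 := by
    intro z hz; rw [hD_def]; dsimp only; rw [if_pos ⟨z, hz⟩]
    exact infDist_zero_of_mem hz
  have hD_pos : ∀ z, z ∉ A → 0 < D z := by
    intro z hz; rw [hD_def]; dsimp only; split
    next hA' => exact (hA.notMem_iff_infDist_pos hA').mp hz
    next hA' => norm_num
  -- Tietze extensions
  have hTietze : ∀ j : Fin k, ∃ a : E → ℝ, Continuous a ∧ (∀ z ∈ A, a z = φ z j) ∧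
      (∀ z, a z ∈ Icc (0:ℝ) 1) := by
    intro j
    have hφj : Continuous (fun z : A => φ z j) := by
      exact (continuous_apply j).comp hφc.restrict
    obtain ⟨g, hg⟩ := ContinuousMap.exists_restrict_eq (Y := ℝ) hA ⟨_, hφj⟩
    refine ⟨fun z => max 0 (min (g z) 1), by fun_prop, ?_, ?_⟩
    · intro z hz
      dsimp only
      have : g z = φ z j := by
        have := congrFun (congrArg ContinuousMap.toFun hg) ⟨z, hz⟩
        simpa using this
      rw [this]
      have h01 := hφ01 z hz j
      rw [min_eq_left h01.2, max_eq_right h01.1]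
    · intro z
      constructor
      · exact le_max_left _ _
      · exact max_le (by norm_num) (min_le_right _ _)
  choose a ha_cont ha_eq ha_mem using hTietze
  -- the extension, coordinatewise
  set h : Fin k → E → ℝ := fun j z =>
    if z ∈ A then φ z j else a j z * min 1 (u j z / D z) + D z * u j z with hh_def
  have hh_eqA : ∀ j, ∀ z ∈ A, h j z = φ z j := fun j z hz => if_pos hz
  have hh_nonneg : ∀ j z, 0 ≤ h j z := by
    intro j z
    rw [hh_def]; dsimp only
    split
    next hz => exact (hφ01 z hz j).1
    next hz =>
      have h1 : 0 ≤ a j z * min 1 (u j z / D z) := by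
        apply mul_nonneg (ha_mem j z).1
        exact le_min (by norm_num) (div_nonneg (hu_nonneg j z) (hD_nonneg z))
      have h2 : 0 ≤ D z * u j z := mul_nonneg (hD_nonneg z) (hu_nonneg j z)
      linarith
  have hh_le : ∀ j z, h j z ≤ a j z + D z * u j z := by
    intro j z
    rw [hh_def]; dsimp only
    split <;> rename_i hz
    · have : φ z j = a j z := (ha_eq j z hz).symm
      rw [← this] at *
      nlinarith [mul_nonneg (hD_nonneg z) (hu_nonneg j z)]
    · have h1 : a j z * min 1 (u j z / D z) ≤ a j z * 1 := by
        apply mul_le_mul_of_nonneg_left (min_le_left _ _) (ha_mem j z).1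
      linarith
  have hh_zero : ∀ j z, z ∉ W j → h j z = 0 := by
    intro j z hz
    rw [hh_def]; dsimp only
    split <;> rename_i hzA
    · exact hφz z hzA j hz
    · rw [hu_zero j z hz]
      simp
  -- continuity of each coordinate
  have hh_cont : ∀ j, Continuous (h j) := by
    intro j
    rw [continuous_iff_continuousAt]
    intro z₀
    by_cases hz₀ : z₀ ∈ A
    · by_cases hpos : 0 < φ z₀ j
      · -- near z₀, h j = a j + D * u j
        have hzW : z₀ ∈ W j := by
          by_contra hc
          exact absurd (hφz z₀ hz₀ j hc) (by linarith)
        have hu₀ : 0 < u j z₀ := hu_pos j z₀ hzW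
        have hev : ∀ᶠ z in nhds z₀, h j z = a j z + D z * u j z := by
          have h1 : ∀ᶠ z in nhds z₀, u j z₀ / 2 < u j z :=
            (hu_cont j).continuousAt.eventually (eventually_gt_nhds (by linarith))
          have h2 : ∀ᶠ z in nhds z₀, D z < u j z₀ / 2 := by
            have h2' : Filter.Tendsto D (nhds z₀) (nhds 0) :=
              hD_zero z₀ hz₀ ▸ hD_cont.continuousAt (x := z₀)
            exact h2'.eventually (eventually_lt_nhds (by linarith))
          filter_upwards [h1, h2] with z h1 h2
          rw [hh_def]; dsimp only
          split <;> rename_i hzA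
          · rw [ha_eq j z hzA, hD_zero z hzA]; ring
          · have hDz : 0 < D z := hD_pos z hzA
            have : (1:ℝ) ≤ u j z / D z := by
              rw [le_div_iff₀ hDz]; linarith
            rw [min_eq_left this]; ring
        refine ContinuousAt.congr ?_ (Filter.EventuallyEq.symm hev)
        exact ((ha_cont j).continuousAt).add ((hD_cont.continuousAt).mul (hu_cont j).continuousAt)
      · -- squeeze to 0
        have hφ0 : φ z₀ j = 0 := le_antisymm (not_lt.mp hpos) (hφ01 z₀ hz₀ j).1
        have hval : h j z₀ = 0 := by rw [hh_eqA j z₀ hz₀, hφ0]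
        rw [ContinuousAt, hval]
        have hG : Filter.Tendsto (fun z => a j z + D z * u j z) (nhds z₀) (nhds 0) := by
          have : Continuous (fun z => a j z + D z * u j z) :=
            (ha_cont j).add (hD_cont.mul (hu_cont j))
          have h0 : a j z₀ + D z₀ * u j z₀ = 0 := by
            rw [ha_eq j z₀ hz₀, hφ0, hD_zero z₀ hz₀]; ring
          exact h0 ▸ this.continuousAt (x := z₀)
        exact tendsto_of_tendsto_of_tendsto_of_le_of_le tendsto_const_nhds hG
          (fun z => hh_nonneg j z) (fun z => hh_le j z)
    · have hev : ∀ᶠ z in nhds z₀, h j z =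
          a j z * min 1 (u j z / D z) + D z * u j z := by
        filter_upwards [hA.isOpen_compl.mem_nhds hz₀] with z hz
        rw [hh_def]; dsimp only; rw [if_neg hz]
      refine ContinuousAt.congr ?_ (Filter.EventuallyEq.symm hev)
      have hD0 : D z₀ ≠ 0 := (hD_pos z₀ hz₀).ne'
      have hdiv : ContinuousAt (fun z => u j z / D z) z₀ :=
        ((hu_cont j).continuousAt).div (hD_cont.continuousAt) hD0
      exact ((ha_cont j).continuousAt.mul (continuousAt_const.min hdiv)).add
        ((hD_cont.continuousAt).mul (hu_cont j).continuousAt)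
  -- final capped function
  refine ⟨fun z j => min (h j z) 1, ?_, ?_, ?_, ?_, ?_⟩
  · exact continuous_pi fun j => (hh_cont j).min continuous_const
  · intro z hz
    funext j
    show min (h j z) 1 = φ z j
    rw [hh_eqA j z hz, min_eq_left (hφ01 z hz j).2]
  · intro z j
    exact ⟨le_min (hh_nonneg j z) (by norm_num), min_le_right _ _⟩
  · intro z j hz
    show min (h j z) 1 = 0
    rw [hh_zero j z hz]
    norm_num
  · intro z hz
    by_cases hzA : z ∈ A
    · obtain ⟨j, hj⟩ := hφp z hzA
      exact ⟨j, by show 0 < min (h j z) 1; rw [hh_eqA j z hzA]; exact lt_min hj (by norm_num)⟩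
    · obtain ⟨j, hj⟩ := mem_iUnion.mp (hcov hz)
      refine ⟨j, ?_⟩
      show 0 < min (h j z) 1
      refine lt_min ?_ (by norm_num)
      have h1 : 0 < D z * u j z := mul_pos (hD_pos z hzA) (hu_pos j z hj)
      have h2 : 0 ≤ a j z * min 1 (u j z / D z) := by
        apply mul_nonneg (ha_mem j z).1
        exact le_min (by norm_num) (div_nonneg (hu_nonneg j z) (hD_nonneg z))
      have : h j z = a j z * min 1 (u j z / D z) + D z * u j z := by
        rw [hh_def]; dsimp only; rw [if_neg hzA]
      linarith
end Ext

section CWPart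
variable {X : Type u} [TopologicalSpace X] [T2Space X] (S : CWStructure X)

/-- The unique cell whose open part contains `x`. -/
noncomputable def cellOf (x : X) : Σ n, S.cell n := (S.partition x).exists.choose

lemma cellOf_spec (x : X) :
    x ∈ S.map (cellOf S x).1 (cellOf S x).2 '' ball 0 1 := (S.partition x).exists.choose_spec

lemma cellOf_eq {x : X} {p : Σ n, S.cell n} (hp : x ∈ S.map p.1 p.2 '' ball 0 1) :
    cellOf S x = p := (S.partition x).unique (cellOf_spec S x) hp

/-- The preimage point of `x` in the open ball of its cell. -/
noncomputable def coordOf (x : X) : EuclideanSpace ℝ (Fin (cellOf S x).1) :=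
  (cellOf_spec S x).choose

lemma coordOf_mem (x : X) : coordOf S x ∈ ball (0 : EuclideanSpace ℝ (Fin (cellOf S x).1)) 1 :=
  (cellOf_spec S x).choose_spec.1

lemma map_coordOf (x : X) : S.map (cellOf S x).1 (cellOf S x).2 (coordOf S x) = x :=
  (cellOf_spec S x).choose_spec.2

set_option maxHeartbeats 1000000 in
lemma dim_le_of_mem_closedBall :
    ∀ n (i : S.cell n) (z : EuclideanSpace ℝ (Fin n)), z ∈ closedBall 0 1 →
      (cellOf S (S.map n i z)).1 ≤ n := by
  intro n
  induction n using Nat.strong_induction_on with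
  | _ n IH =>
    intro i z hz
    by_cases hb : z ∈ ball (0 : EuclideanSpace ℝ (Fin n)) 1
    · have hcz : cellOf S (S.map n i z) = ⟨n, i⟩ := cellOf_eq S (p := ⟨n, i⟩) ⟨z, hb, rfl⟩
      rw [hcz]
    · have hs : z ∈ sphere (0 : EuclideanSpace ℝ (Fin n)) 1 := by
        simp only [mem_closedBall, mem_ball, mem_sphere] at *
        exact le_antisymm hz (not_lt.mp hb)
      have hmem := S.mapsTo_boundary n i hs
      simp only [mem_iUnion] at hmem
      obtain ⟨m, hm, j, z', hz', heq⟩ := hmem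
      rw [← heq]
      exact (IH m hm j z' hz').trans hm.le

lemma dim_lt_of_mem_sphere {n : ℕ} (i : S.cell n) {z : EuclideanSpace ℝ (Fin n)}
    (hz : z ∈ sphere (0 : EuclideanSpace ℝ (Fin n)) 1) :
    (cellOf S (S.map n i z)).1 < n := by
  have hmem := S.mapsTo_boundary n i hz
  simp only [mem_iUnion] at hmem
  obtain ⟨m, hm, j, z', hz', heq⟩ := hmem
  rw [← heq]
  exact lt_of_le_of_lt (dim_le_of_mem_closedBall S m j z' hz') hm

/-- Goodness predicate for candidate extensions over one cell. -/
def GoodFor (k : ℕ) (V : Fin k → Set X) (n : ℕ) (i : S.cell n)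
    (bd : EuclideanSpace ℝ (Fin n) → Fin k → ℝ)
    (H : EuclideanSpace ℝ (Fin n) → Fin k → ℝ) : Prop :=
  Continuous H ∧ (∀ z ∈ sphere (0 : EuclideanSpace ℝ (Fin n)) 1, H z = bd z) ∧
    (∀ z j, H z j ∈ Icc (0:ℝ) 1) ∧
    (∀ z ∈ closedBall (0 : EuclideanSpace ℝ (Fin n)) 1, ∀ j, S.map n i z ∉ V j → H z j = 0) ∧
    (∀ z ∈ closedBall (0 : EuclideanSpace ℝ (Fin n)) 1, ∃ j, 0 < H z j)

open Classical in
noncomputable def psiE (k : ℕ) (V : Fin k → Set X) :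
    (n : ℕ) → S.cell n → EuclideanSpace ℝ (Fin n) → Fin k → ℝ
  | n, i =>
    let bd : EuclideanSpace ℝ (Fin n) → Fin k → ℝ := fun z =>
      if h : (cellOf S (S.map n i z)).1 < n then
        psiE k V (cellOf S (S.map n i z)).1 (cellOf S (S.map n i z)).2 (coordOf S (S.map n i z))
      else 0
    if hH : ∃ H, GoodFor S k V n i bd H then hH.choose else fun _ _ => 0
  termination_by n _ => n
  decreasing_by exact h

open Classical in
noncomputable def bdOf (k : ℕ) (V : Fin k → Set X) (n : ℕ) (i : S.cell n) :
    EuclideanSpace ℝ (Fin n) → Fin k → ℝ := fun z =>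
  if h : (cellOf S (S.map n i z)).1 < n then
    psiE S k V (cellOf S (S.map n i z)).1 (cellOf S (S.map n i z)).2 (coordOf S (S.map n i z))
  else 0

open Classical in
lemma psiE_eq (k : ℕ) (V : Fin k → Set X) (n : ℕ) (i : S.cell n) :
    psiE S k V n i =
      if hH : ∃ H, GoodFor S k V n i (bdOf S k V n i) H then hH.choose else fun _ _ => 0 := by
  rw [psiE]
  rfl

/-- The global function. -/
noncomputable def Psi (k : ℕ) (V : Fin k → Set X) : X → Fin k → ℝ := fun x =>
  psiE S k V (cellOf S x).1 (cellOf S x).2 (coordOf S x)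

end CWPart

section CWMain
variable {X : Type u} [TopologicalSpace X] [T2Space X] (S : CWStructure X)

lemma psiE_congr (k : ℕ) (V : Fin k → Set X) (p q : Σ n, S.cell n) (hpq : p = q)
    (w : EuclideanSpace ℝ (Fin p.1)) (z : EuclideanSpace ℝ (Fin q.1))
    (hw : w ∈ ball 0 1) (hz : z ∈ ball 0 1)
    (hm : S.map p.1 p.2 w = S.map q.1 q.2 z) :
    psiE S k V p.1 p.2 w = psiE S k V q.1 q.2 z := by
  subst hpq
  rw [S.injOn p.1 p.2 hw hz hm]

lemma psi_map_eq_of_ball (k : ℕ) (V : Fin k → Set X) {n : ℕ} {i : S.cell n}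
    {z : EuclideanSpace ℝ (Fin n)} (hz : z ∈ ball 0 1) :
    Psi S k V (S.map n i z) = psiE S k V n i z := by
  have hc : cellOf S (S.map n i z) = ⟨n, i⟩ := cellOf_eq S (p := ⟨n, i⟩) ⟨z, hz, rfl⟩
  exact psiE_congr S k V _ ⟨n, i⟩ hc _ z (coordOf_mem S _) hz
    (by rw [map_coordOf S (S.map n i z)])

lemma bdOf_eq_psi (k : ℕ) (V : Fin k → Set X) {n : ℕ} (i : S.cell n)
    {z : EuclideanSpace ℝ (Fin n)} (hz : z ∈ sphere 0 1) :
    bdOf S k V n i z = Psi S k V (S.map n i z) := by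
  unfold bdOf Psi
  rw [dif_pos (dim_lt_of_mem_sphere S i hz)]

lemma psi_map_eq (k : ℕ) (V : Fin k → Set X) {n : ℕ} {i : S.cell n}
    (hGood : GoodFor S k V n i (bdOf S k V n i) (psiE S k V n i))
    {z : EuclideanSpace ℝ (Fin n)} (hz : z ∈ closedBall 0 1) :
    Psi S k V (S.map n i z) = psiE S k V n i z := by
  by_cases hb : z ∈ ball (0 : EuclideanSpace ℝ (Fin n)) 1
  · exact psi_map_eq_of_ball S k V hb
  · have hs : z ∈ sphere (0 : EuclideanSpace ℝ (Fin n)) 1 := by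
      simp only [mem_closedBall, mem_ball, mem_sphere] at *
      exact le_antisymm hz (not_lt.mp hb)
    rw [hGood.2.1 z hs, bdOf_eq_psi S k V i hs]

lemma main_good (k : ℕ) (V : Fin k → Set X) (hV : ∀ j, IsOpen (V j))
    (hVcov : ∀ x, ∃ j, x ∈ V j) :
    ∀ n (i : S.cell n), GoodFor S k V n i (bdOf S k V n i) (psiE S k V n i) := by
  intro n
  induction n using Nat.strong_induction_on with
  | _ n IH =>
  intro i
  suffices hex : ∃ H, GoodFor S k V n i (bdOf S k V n i) H by
    rw [psiE_eq, dif_pos hex]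
    exact hex.choose_spec
  classical
  -- continuity of `Psi` on each lower-dimensional closed cell
  have hPsiCell : ∀ p : Σ m, S.cell m, p.1 < n →
      ContinuousOn (Psi S k V) (S.map p.1 p.2 '' closedBall 0 1) := by
    intro p hp
    have hGp := IH p.1 hp p.2
    rw [continuousOn_iff_continuous_restrict]
    haveI : CompactSpace ↥(closedBall (0 : EuclideanSpace ℝ (Fin p.1)) 1) :=
      isCompact_iff_compactSpace.mp (isCompact_closedBall _ _)
    set e := S.map p.1 p.2 '' closedBall 0 1 with he
    let π : ↥(closedBall (0 : EuclideanSpace ℝ (Fin p.1)) 1) → ↥e := fun z =>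
      ⟨S.map p.1 p.2 z, mem_image_of_mem _ z.2⟩
    have hπc : Continuous π :=
      Continuous.subtype_mk ((S.continuousOn p.1 p.2).restrict) _
    have hπs : Function.Surjective π := by
      rintro ⟨x, z, hz, rfl⟩
      exact ⟨⟨z, hz⟩, rfl⟩
    have hq : Topology.IsQuotientMap π := (hπc.isClosedMap).isQuotientMap hπc hπs
    rw [hq.continuous_iff]
    have heq : e.restrict (Psi S k V) ∘ π =
        fun z : ↥(closedBall (0 : EuclideanSpace ℝ (Fin p.1)) 1) =>
          psiE S k V p.1 p.2 z :=
      funext fun z => psi_map_eq S k V hGp z.2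
    change Continuous (e.restrict (Psi S k V) ∘ π)
    rw [heq]
    exact hGp.1.comp continuous_subtype_val
  -- continuity of the boundary data
  have hbd_cont : ContinuousOn (bdOf S k V n i) (sphere (0 : EuclideanSpace ℝ (Fin n)) 1) := by
    set F : Finset (Σ m, S.cell m) :=
      (S.closureFinite n i).toFinset.filter (fun p => p.1 < n) with hF
    set T : Set X := ⋃ p : ↥F, S.map p.1.1 p.1.2 '' closedBall 0 1 with hT
    have hTc : ContinuousOn (Psi S k V) T := by
      refine LocallyFinite.continuousOn_iUnion (locallyFinite_of_finite _) ?_ ?_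
      · intro p
        exact ((isCompact_closedBall _ _).image_of_continuousOn
          (S.continuousOn p.1.1 p.1.2)).isClosed
      · intro p
        refine hPsiCell p.1 ?_
        have hp2 := p.2
        simp only [hF, Finset.mem_filter] at hp2
        exact hp2.2
    have hmaps : MapsTo (S.map n i) (sphere (0 : EuclideanSpace ℝ (Fin n)) 1) T := by
      intro z hz
      set x := S.map n i z with hx
      have hlt : (cellOf S x).1 < n := dim_lt_of_mem_sphere S i hz
      have hmemF : cellOf S x ∈ F := by
        rw [hF]
        exact Finset.mem_filter.mpr ⟨(S.closureFinite n i).mem_toFinset.mpr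
          ⟨x, cellOf_spec S x, ⟨z, sphere_subset_closedBall hz, rfl⟩⟩, hlt⟩
      rw [hT, mem_iUnion]
      exact ⟨⟨cellOf S x, hmemF⟩,
        ⟨coordOf S x, ball_subset_closedBall (coordOf_mem S x), map_coordOf S x⟩⟩
    have hcomp : ContinuousOn (fun z => Psi S k V (S.map n i z))
        (sphere (0 : EuclideanSpace ℝ (Fin n)) 1) :=
      ContinuousOn.comp hTc ((S.continuousOn n i).mono sphere_subset_closedBall) hmaps
    exact hcomp.congr fun z hz => bdOf_eq_psi S k V i hz
  -- relatively open preimages of the cover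
  have hO : ∀ j : Fin k, ∃ O : Set (EuclideanSpace ℝ (Fin n)), IsOpen O ∧
      ∀ z ∈ closedBall (0 : EuclideanSpace ℝ (Fin n)) 1, (z ∈ O ↔ S.map n i z ∈ V j) := by
    intro j
    have hc := (S.continuousOn n i).restrict
    have hop : IsOpen ((closedBall (0 : EuclideanSpace ℝ (Fin n)) 1).restrict (S.map n i) ⁻¹'
        (V j)) := (hV j).preimage hc
    rw [isOpen_induced_iff] at hop
    obtain ⟨O, hOopen, hOeq⟩ := hop
    refine ⟨O, hOopen, fun z hz => ?_⟩
    have := Set.ext_iff.mp hOeq ⟨z, hz⟩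
    exact this
  choose O hOopen hOiff using hO
  -- apply the extension lemma
  obtain ⟨H, hHc, hHA, hH01, hHz, hHp⟩ := ext_lemma (sphere (0 : EuclideanSpace ℝ (Fin n)) 1)
    (isClosed_sphere) (closedBall 0 1) O hOopen
    (fun z hz => by
      obtain ⟨j, hj⟩ := hVcov (S.map n i z)
      exact mem_iUnion.mpr ⟨j, (hOiff j z hz).mpr hj⟩)
    (bdOf S k V n i) hbd_cont
    (fun z hz j => by
      have hlt : (cellOf S (S.map n i z)).1 < n := dim_lt_of_mem_sphere S i hz
      have hG := IH _ hlt (cellOf S (S.map n i z)).2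
      rw [bdOf_eq_psi S k V i hz]
      exact hG.2.2.1 _ j)
    (fun z hz j hzO => by
      have hlt : (cellOf S (S.map n i z)).1 < n := dim_lt_of_mem_sphere S i hz
      have hG := IH _ hlt (cellOf S (S.map n i z)).2
      have hnotV : S.map n i z ∉ V j := fun hmem =>
        hzO ((hOiff j z (sphere_subset_closedBall hz)).mpr hmem)
      rw [bdOf_eq_psi S k V i hz]
      refine hG.2.2.2.1 _ (ball_subset_closedBall (coordOf_mem S _)) j ?_
      rw [map_coordOf S _]
      exact hnotV)
    (fun z hz => by
      have hlt : (cellOf S (S.map n i z)).1 < n := dim_lt_of_mem_sphere S i hz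
      have hG := IH _ hlt (cellOf S (S.map n i z)).2
      rw [bdOf_eq_psi S k V i hz]
      exact hG.2.2.2.2 _ (ball_subset_closedBall (coordOf_mem S _)))
  refine ⟨H, hHc, fun z hz => hHA z hz, fun z j => hH01 z j, ?_, fun z hz => hHp z hz⟩
  intro z hz j hnotV
  refine hHz z j fun hzO => hnotV ((hOiff j z hz).mp hzO)

include S in
lemma cw_partition (k : ℕ) (V : Fin k → Set X) (hV : ∀ j, IsOpen (V j))
    (hVcov : ∀ x, ∃ j, x ∈ V j) :
    ∃ Ψ : X → Fin k → ℝ, Continuous Ψ ∧ (∀ x j, 0 ≤ Ψ x j) ∧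
      (∀ x j, x ∉ V j → Ψ x j = 0) ∧ ∀ x, ∃ j, 0 < Ψ x j := by
  have hGood := main_good S k V hV hVcov
  refine ⟨Psi S k V, ?_, ?_, ?_, ?_⟩
  · rw [continuous_iff_isClosed]
    intro C hC
    apply S.weakTopology
    intro n i
    have hset : Psi S k V ⁻¹' C ∩ S.map n i '' closedBall 0 1 =
        S.map n i '' (closedBall 0 1 ∩ psiE S k V n i ⁻¹' C) := by
      ext x
      constructor
      · rintro ⟨hxC, z, hz, rfl⟩
        exact ⟨z, ⟨hz, by
          rw [mem_preimage, ← psi_map_eq S k V (hGood n i) hz]; exact hxC⟩, rfl⟩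
      · rintro ⟨z, ⟨hz, hzC⟩, rfl⟩
        exact ⟨by rw [mem_preimage, psi_map_eq S k V (hGood n i) hz]; exact hzC,
          ⟨z, hz, rfl⟩⟩
    rw [hset]
    exact (((isCompact_closedBall _ _).inter_right (hC.preimage (hGood n i).1)).image_of_continuousOn
      ((S.continuousOn n i).mono inter_subset_left)).isClosed
  · intro x j
    have := (hGood (cellOf S x).1 (cellOf S x).2).2.2.1 (coordOf S x) j
    have hPsi : Psi S k V x = psiE S k V (cellOf S x).1 (cellOf S x).2 (coordOf S x) := rfl
    rw [hPsi]
    exact this.1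
  · intro x j hxV
    have hPsi : Psi S k V x = psiE S k V (cellOf S x).1 (cellOf S x).2 (coordOf S x) := rfl
    rw [hPsi]
    refine (hGood (cellOf S x).1 (cellOf S x).2).2.2.2.1 (coordOf S x)
      (ball_subset_closedBall (coordOf_mem S x)) j ?_
    rw [map_coordOf S x]
    exact hxV
  · intro x
    have hPsi : Psi S k V x = psiE S k V (cellOf S x).1 (cellOf S x).2 (coordOf S x) := rfl
    rw [hPsi]
    exact (hGood (cellOf S x).1 (cellOf S x).2).2.2.2.2 (coordOf S x)
      (ball_subset_closedBall (coordOf_mem S x))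

end CWMain


section QuotLemmas
variable {M : Type*} [TopologicalSpace M] {τ : M → M}

lemma involQuotMk_tau (x : M) : involQuotMk τ (τ x) = involQuotMk τ x :=
  (Quot.sound (r := orbitRelOf τ) (show orbitRelOf τ x (τ x) from rfl)).symm

lemma involQuotMk_eq_iff (hτinv : Function.Involutive τ) {x y : M} :
    involQuotMk τ x = involQuotMk τ y ↔ y = x ∨ y = τ x := by
  constructor
  · intro hxy
    have hresp : ∀ a b : M, orbitRelOf τ a b → ({a, τ a} : Set M) = {b, τ b} := by
      intro a b hab
      rw [show b = τ a from hab]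
      rw [hτinv a, Set.pair_comm]
    have hsets := congrArg (Quot.lift (fun a => ({a, τ a} : Set M)) hresp) hxy
    have hy : y ∈ ({x, τ x} : Set M) := by
      have h2 : ({x, τ x} : Set M) = {y, τ y} := hsets
      rw [h2]
      simp
    simpa using hy
  · rintro (rfl | rfl)
    · rfl
    · exact Quot.sound (r := orbitRelOf τ) (show orbitRelOf τ x (τ x) from rfl)

lemma involQuotMk_continuous : Continuous (involQuotMk τ) := continuous_quot_mk

lemma involQuotMk_isOpenMap (hτc : Continuous τ) (hτinv : Function.Involutive τ) :
    IsOpenMap (involQuotMk τ) := by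
  intro U hU
  have hpre : involQuotMk τ ⁻¹' (involQuotMk τ '' U) = U ∪ τ ⁻¹' U := by
    ext x
    simp only [mem_preimage, mem_image, mem_union]
    constructor
    · rintro ⟨u, hu, hux⟩
      rcases (involQuotMk_eq_iff hτinv).mp hux with h | h
      · left; rw [h]; exact hu
      · right
        show τ x ∈ U
        rw [h, hτinv u]
        exact hu
    · rintro (hx | hx)
      · exact ⟨x, hx, rfl⟩
      · exact ⟨τ x, hx, involQuotMk_tau x⟩
  have hopen : IsOpen (involQuotMk τ ⁻¹' (involQuotMk τ '' U)) := by
    rw [hpre]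
    exact hU.union (hU.preimage hτc)
  exact (isQuotientMap_quot_mk (r := orbitRelOf τ)).isOpen_preimage.mp hopen

end QuotLemmas

lemma mem_sphere_normalize {n : ℕ} (v : EuclideanSpace ℝ (Fin (n+1))) (hv : v ≠ 0) :
    ‖v‖⁻¹ • v ∈ Metric.sphere (0 : EuclideanSpace ℝ (Fin (n+1))) 1 := by
  rw [mem_sphere_zero_iff_norm, norm_smul, norm_inv, norm_norm,
    inv_mul_cancel₀ (norm_ne_zero_iff.mpr hv)]


section UpDown
variable {M : Type*} [TopologicalSpace M] {τ : M → M}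

lemma equivariant_of_cover [T2Space M]
    (hτc : Continuous τ) (hτinv : Function.Involutive τ) (hτfree : ∀ x, τ x ≠ x)
    (m : ℕ) (U : Fin (m+1) → Set (InvolQuot τ)) (hUo : ∀ i, IsOpen (U i))
    (hUsec : ∀ i, IsLocalSection (involQuotMk τ) (U i))
    (Ψ : M → Fin (m+1) → ℝ) (hΨc : Continuous Ψ) (hΨ0 : ∀ x j, 0 ≤ Ψ x j)
    (hΨz : ∀ x j, x ∉ involQuotMk τ ⁻¹' (U j) → Ψ x j = 0) (hΨp : ∀ x, ∃ j, 0 < Ψ x j) :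
    ∃ g : M → Sph m, Continuous g ∧ ∀ x, g (τ x) = antipodal m (g x) := by
  classical
  set q : M → InvolQuot τ := involQuotMk τ with hqdef
  set V : Fin (m+1) → Set M := fun i => q ⁻¹' (U i) with hVdef
  have hVo : ∀ i, IsOpen (V i) := fun i => (hUo i).preimage involQuotMk_continuous
  have hVτ : ∀ i (x : M), τ x ∈ V i ↔ x ∈ V i := by
    intro i x
    simp only [hVdef, mem_preimage, hqdef, involQuotMk_tau]
  -- symmetrized partition functions
  set Φ : M → Fin (m+1) → ℝ := fun x j => Ψ x j + Ψ (τ x) j with hΦdef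
  have hΦc : ∀ j, Continuous (fun x => Φ x j) := fun j =>
    ((continuous_apply j).comp hΨc).add (((continuous_apply j).comp hΨc).comp hτc)
  have hΦ0 : ∀ x j, 0 ≤ Φ x j := fun x j => add_nonneg (hΨ0 x j) (hΨ0 (τ x) j)
  have hΦτ : ∀ x j, Φ (τ x) j = Φ x j := by
    intro x j
    simp only [hΦdef, hτinv x]
    ring
  have hΦz : ∀ x j, x ∉ V j → Φ x j = 0 := by
    intro x j hx
    have h2 : τ x ∉ V j := fun hc => hx ((hVτ j x).mp hc)
    simp only [hΦdef, hΨz x j hx, hΨz (τ x) j h2, add_zero]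
  have hΦp : ∀ x, ∃ j, 0 < Φ x j := by
    intro x
    obtain ⟨j, hj⟩ := hΨp x
    exact ⟨j, lt_of_lt_of_le hj (le_add_of_nonneg_right (hΨ0 (τ x) j))⟩
  -- the sections and the clopen decomposition of each V i
  set s : ∀ i, ↥(U i) → M := fun i => (hUsec i).choose with hsdef
  have hsc : ∀ i, Continuous (s i) := fun i => (hUsec i).choose_spec.1
  have hsq : ∀ i (b : ↥(U i)), q (s i b) = (b : InvolQuot τ) := fun i => (hUsec i).choose_spec.2
  set r : ∀ i, ↥(V i) → M := fun i v => s i ⟨q v.1, v.2⟩ with hrdef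
  have hrc : ∀ i, Continuous (r i) := fun i =>
    (hsc i).comp (Continuous.subtype_mk (involQuotMk_continuous.comp continuous_subtype_val) _)
  have hrq : ∀ i v, q (r i v) = q v.1 := fun i v => hsq i ⟨q v.1, v.2⟩
  have hrcases : ∀ i v, r i v = v.1 ∨ r i v = τ v.1 := by
    intro i v
    rcases (involQuotMk_eq_iff hτinv).mp (hrq i v) with h | h
    · exact Or.inl h.symm
    · refine Or.inr ?_
      rw [h, hτinv]
  set OA : Fin (m+1) → Set M := fun i => Subtype.val '' {v : ↥(V i) | r i v = v.1} with hOAdef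
  set OB : Fin (m+1) → Set M := fun i => Subtype.val '' {v : ↥(V i) | r i v = τ v.1} with hOBdef
  have hmemOA : ∀ i x, x ∈ OA i ↔ ∃ h : x ∈ V i, r i ⟨x, h⟩ = x := by
    intro i x
    constructor
    · rintro ⟨⟨xv, hxv⟩, hv, rfl⟩
      exact ⟨hxv, hv⟩
    · rintro ⟨hx, hr⟩
      exact ⟨⟨x, hx⟩, hr, rfl⟩
  have hmemOB : ∀ i x, x ∈ OB i ↔ ∃ h : x ∈ V i, r i ⟨x, h⟩ = τ x := by
    intro i x
    constructor
    · rintro ⟨⟨xv, hxv⟩, hv, rfl⟩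
      exact ⟨hxv, hv⟩
    · rintro ⟨hx, hr⟩
      exact ⟨⟨x, hx⟩, hr, rfl⟩
  have hOAV : ∀ i, OA i ⊆ V i := fun i => Subtype.coe_image_subset _ _
  have hOBV : ∀ i, OB i ⊆ V i := fun i => Subtype.coe_image_subset _ _
  have hdisj : ∀ i x, x ∈ OA i → x ∈ OB i → False := by
    intro i x hA hB
    obtain ⟨h1, hr1⟩ := (hmemOA i x).mp hA
    obtain ⟨h2, hr2⟩ := (hmemOB i x).mp hB
    exact hτfree x (by rw [← hr2, hr1])
  have hVsub : ∀ i x, x ∈ V i → x ∈ OA i ∨ x ∈ OB i := by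
    intro i x hx
    rcases hrcases i ⟨x, hx⟩ with h | h
    · exact Or.inl ((hmemOA i x).mpr ⟨hx, h⟩)
    · exact Or.inr ((hmemOB i x).mpr ⟨hx, h⟩)
  have hOAopen : ∀ i, IsOpen (OA i) := by
    intro i
    apply (hVo i).isOpenMap_subtype_val
    have hclB : IsClosed {v : ↥(V i) | r i v = τ v.1} :=
      isClosed_eq (hrc i) (hτc.comp continuous_subtype_val)
    have heq : {v : ↥(V i) | r i v = v.1} = {v : ↥(V i) | r i v = τ v.1}ᶜ := by
      ext v
      simp only [mem_setOf_eq, mem_compl_iff]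
      constructor
      · intro h hB
        exact hτfree v.1 (by rw [← hB, h])
      · intro h
        rcases hrcases i v with h1 | h1
        · exact h1
        · exact absurd h1 h
    rw [heq]
    exact hclB.isOpen_compl
  have hOBopen : ∀ i, IsOpen (OB i) := by
    intro i
    apply (hVo i).isOpenMap_subtype_val
    have hclA : IsClosed {v : ↥(V i) | r i v = v.1} :=
      isClosed_eq (hrc i) continuous_subtype_val
    have heq : {v : ↥(V i) | r i v = τ v.1} = {v : ↥(V i) | r i v = v.1}ᶜ := by
      ext v
      simp only [mem_setOf_eq, mem_compl_iff]
      constructor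
      · intro h hA
        exact hτfree v.1 (by rw [← h, hA])
      · intro h
        rcases hrcases i v with h1 | h1
        · exact absurd h1 h
        · exact h1
    rw [heq]
    exact hclA.isOpen_compl
  have hτOA : ∀ i x, x ∈ OA i → τ x ∈ OB i := by
    intro i x hx
    obtain ⟨hxV, hr⟩ := (hmemOA i x).mp hx
    have hτV : τ x ∈ V i := (hVτ i x).mpr hxV
    refine (hmemOB i (τ x)).mpr ⟨hτV, ?_⟩
    show s i ⟨q (τ x), hτV⟩ = τ (τ x)
    have harg : (⟨q (τ x), hτV⟩ : ↥(U i)) = ⟨q x, hxV⟩ := Subtype.ext (involQuotMk_tau x)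
    rw [harg, hτinv x]
    exact hr
  have hτOB : ∀ i x, x ∈ OB i → τ x ∈ OA i := by
    intro i x hx
    obtain ⟨hxV, hr⟩ := (hmemOB i x).mp hx
    have hτV : τ x ∈ V i := (hVτ i x).mpr hxV
    refine (hmemOA i (τ x)).mpr ⟨hτV, ?_⟩
    show s i ⟨q (τ x), hτV⟩ = τ x
    have harg : (⟨q (τ x), hτV⟩ : ↥(U i)) = ⟨q x, hxV⟩ := Subtype.ext (involQuotMk_tau x)
    rw [harg]
    exact hr
  -- signed coordinate functions
  set γ : Fin (m+1) → M → ℝ := fun i x =>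
    if x ∈ OA i then Φ x i else if x ∈ OB i then -Φ x i else 0 with hγdef
  have hγbound : ∀ i x, -Φ x i ≤ γ i x ∧ γ i x ≤ Φ x i := by
    intro i x
    rw [hγdef]
    dsimp only
    split
    · constructor <;> nlinarith [hΦ0 x i]
    · split
      · constructor <;> nlinarith [hΦ0 x i]
      · constructor <;> nlinarith [hΦ0 x i]
  have hγc : ∀ i, Continuous (γ i) := by
    intro i
    rw [continuous_iff_continuousAt]
    intro x
    by_cases hA : x ∈ OA i
    · have hev : ∀ᶠ y in nhds x, Φ y i = γ i y := by
        filter_upwards [(hOAopen i).mem_nhds hA] with y hy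
        rw [hγdef]
        dsimp only
        rw [if_pos hy]
      exact ContinuousAt.congr (hΦc i).continuousAt hev
    · by_cases hB : x ∈ OB i
      · have hev : ∀ᶠ y in nhds x, -Φ y i = γ i y := by
          filter_upwards [(hOBopen i).mem_nhds hB] with y hy
          rw [hγdef]
          dsimp only
          rw [if_neg (fun hc => hdisj i y hc hy), if_pos hy]
        exact ContinuousAt.congr ((hΦc i).neg.continuousAt) hev
      · have hxV : x ∉ V i := fun hc => (hVsub i x hc).elim hA hB
        have hx0 : Φ x i = 0 := hΦz x i hxV
        have hγx : γ i x = 0 := by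
          rw [hγdef]
          dsimp only
          rw [if_neg hA, if_neg hB]
        rw [ContinuousAt, hγx]
        have hlo : Filter.Tendsto (fun y => -Φ y i) (nhds x) (nhds 0) := by
          have := ((hΦc i).neg.continuousAt (x := x))
          rw [ContinuousAt] at this
          rw [Pi.neg_apply, hx0, neg_zero] at this; exact this
        have hhi : Filter.Tendsto (fun y => Φ y i) (nhds x) (nhds 0) := by
          have := ((hΦc i).continuousAt (x := x))
          rw [ContinuousAt] at this
          simpa [hx0] using this
        exact tendsto_of_tendsto_of_tendsto_of_le_of_le hlo hhi
          (fun y => (hγbound i y).1) (fun y => (hγbound i y).2)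
  have hγτ : ∀ i x, γ i (τ x) = -γ i x := by
    intro i x
    by_cases hA : x ∈ OA i
    · have h1 : τ x ∈ OB i := hτOA i x hA
      have h2 : τ x ∉ OA i := fun hc => hdisj i (τ x) hc h1
      rw [hγdef]
      dsimp only
      rw [if_neg h2, if_pos h1, if_pos hA, hΦτ]
    · by_cases hB : x ∈ OB i
      · have h1 : τ x ∈ OA i := hτOB i x hB
        rw [hγdef]
        dsimp only
        rw [if_pos h1, if_neg hA, if_pos hB, hΦτ, neg_neg]
      · have hxV : x ∉ V i := fun hc => (hVsub i x hc).elim hA hB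
        have hτV : τ x ∉ V i := fun hc => hxV ((hVτ i x).mp hc)
        have h1 : τ x ∉ OA i := fun hc => hτV (hOAV i hc)
        have h2 : τ x ∉ OB i := fun hc => hτV (hOBV i hc)
        rw [hγdef]
        dsimp only
        rw [if_neg h1, if_neg h2, if_neg hA, if_neg hB, neg_zero]
  have hγnz : ∀ x, ∃ i, γ i x ≠ 0 := by
    intro x
    obtain ⟨j, hj⟩ := hΦp x
    have hxV : x ∈ V j := by
      by_contra hc
      rw [hΦz x j hc] at hj
      exact lt_irrefl _ hj
    rcases hVsub j x hxV with hA | hB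
    · refine ⟨j, ?_⟩
      rw [hγdef]
      dsimp only
      rw [if_pos hA]
      exact ne_of_gt hj
    · refine ⟨j, ?_⟩
      rw [hγdef]
      dsimp only
      rw [if_neg (fun hc => hdisj j x hc hB), if_pos hB]
      exact ne_of_lt (neg_lt_zero.mpr hj)
  -- assemble the map to the sphere
  set G : M → EuclideanSpace ℝ (Fin (m+1)) := fun x =>
    (EuclideanSpace.equiv (Fin (m+1)) ℝ).symm (fun i => γ i x) with hGdef
  have hGc : Continuous G :=
    (EuclideanSpace.equiv (Fin (m+1)) ℝ).symm.continuous.comp (continuous_pi fun i => hγc i)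
  have hGcoord : ∀ x i, G x i = γ i x := fun x i => rfl
  have hGne : ∀ x, G x ≠ 0 := by
    intro x hc
    obtain ⟨i, hi⟩ := hγnz x
    apply hi
    rw [← hGcoord x i, hc]
    rfl
  have hGτ : ∀ x, G (τ x) = -G x := by
    intro x
    ext i
    rw [hGcoord, hγτ, PiLp.neg_apply, hGcoord]
  have hGnorm : ∀ x, ‖G x‖ ≠ 0 := fun x => norm_ne_zero_iff.mpr (hGne x)
  refine ⟨fun x => ⟨‖G x‖⁻¹ • G x, mem_sphere_normalize _ (hGne x)⟩, ?_, ?_⟩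
  · exact Continuous.subtype_mk ((hGc.norm.inv₀ hGnorm).smul hGc) _
  · intro x
    show _ = antipodal m _
    unfold antipodal
    apply Subtype.ext
    rw [coe_neg_sphere]
    show ‖G (τ x)‖⁻¹ • G (τ x) = -(‖G x‖⁻¹ • G x)
    rw [hGτ x, norm_neg, smul_neg]
end UpDown

section Down
variable {M : Type*} [TopologicalSpace M] {τ : M → M}

lemma cover_of_equivariant (hτc : Continuous τ) (hτinv : Function.Involutive τ)
    (k₀ : ℕ) (g : M → Sph k₀) (hgc : Continuous g)
    (hge : ∀ x, g (τ x) = antipodal k₀ (g x)) :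
    ∃ U : Fin (k₀+1) → Set (InvolQuot τ), (∀ i, IsOpen (U i)) ∧ (⋃ i, U i) = univ ∧
      ∀ i, IsLocalSection (involQuotMk τ) (U i) := by
  classical
  have hgτ : ∀ (x : M) (i : Fin (k₀+1)),
      (g (τ x) : EuclideanSpace ℝ (Fin (k₀+1))) i = -(g x : EuclideanSpace ℝ (Fin (k₀+1))) i := by
    intro x i
    rw [hge x]
    show ((-(g x) : Sph k₀) : EuclideanSpace ℝ (Fin (k₀+1))) i = _
    rw [coe_neg_sphere]
    rfl
  have hresp : ∀ i : Fin (k₀+1), ∀ a b : M, orbitRelOf τ a b →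
      |(g a : EuclideanSpace ℝ (Fin (k₀+1))) i| = |(g b : EuclideanSpace ℝ (Fin (k₀+1))) i| := by
    intro i a b hab
    rw [show b = τ a from hab, hgτ a i, abs_neg]
  set gq : Fin (k₀+1) → InvolQuot τ → ℝ := fun i =>
    Quot.lift (fun x => |(g x : EuclideanSpace ℝ (Fin (k₀+1))) i|) (hresp i) with hgqdef
  have hgqc : ∀ i, Continuous (gq i) :=
    fun i => continuous_quot_lift _ (((PiLp.continuous_apply (p := 2) (β := fun _ => ℝ) i).comp
      (continuous_subtype_val.comp hgc)).abs)
  have hgqmk : ∀ i (x : M), gq i (involQuotMk τ x) = |(g x : EuclideanSpace ℝ (Fin (k₀+1))) i| :=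
    fun i x => rfl
  refine ⟨fun i => {b | gq i b ≠ 0}, ?_, ?_, ?_⟩
  · intro i
    exact isOpen_compl_singleton.preimage (hgqc i)
  · rw [eq_univ_iff_forall]
    intro b
    obtain ⟨x, rfl⟩ := Quot.exists_rep b
    rw [mem_iUnion]
    by_contra hc
    push_neg at hc
    have hall : ∀ i, (g x : EuclideanSpace ℝ (Fin (k₀+1))) i = 0 := by
      intro i
      have := hc i
      simp only [mem_setOf_eq, not_not] at this
      have h2 : |(g x : EuclideanSpace ℝ (Fin (k₀+1))) i| = 0 := this
      exact abs_eq_zero.mp h2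
    have hzero : (g x : EuclideanSpace ℝ (Fin (k₀+1))) = 0 := by ext i; simpa using hall i
    have h1 : ‖(g x : EuclideanSpace ℝ (Fin (k₀+1)))‖ = 1 :=
      mem_sphere_zero_iff_norm.mp (g x).2
    rw [hzero] at h1
    simp at h1
  · intro i
    set Ui : Set (InvolQuot τ) := {b | gq i b ≠ 0} with hUidef
    have hUio : IsOpen Ui := isOpen_compl_singleton.preimage (hgqc i)
    set Ap : Set M := {x | 0 < (g x : EuclideanSpace ℝ (Fin (k₀+1))) i} with hApdef
    have hApo : IsOpen Ap :=
      isOpen_lt continuous_const ((PiLp.continuous_apply (p := 2) (β := fun _ => ℝ) i).comp (continuous_subtype_val.comp hgc))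
    set e : ↥Ap → ↥Ui := fun a => ⟨involQuotMk τ a.1, by
      show gq i (involQuotMk τ a.1) ≠ 0
      rw [hgqmk]
      exact abs_ne_zero.mpr (ne_of_gt a.2)⟩ with hedef
    have hec : Continuous e :=
      Continuous.subtype_mk (involQuotMk_continuous.comp continuous_subtype_val) _
    have hebij : Function.Bijective e := by
      constructor
      · intro a b hab
        apply Subtype.ext
        have hmk : involQuotMk τ a.1 = involQuotMk τ b.1 := congrArg Subtype.val hab
        rcases (involQuotMk_eq_iff hτinv).mp hmk with h | h
        · exact h.symm
        · exfalso
          have hb2 : 0 < (g b.1 : EuclideanSpace ℝ (Fin (k₀+1))) i := b.2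
          have ha2 : 0 < (g a.1 : EuclideanSpace ℝ (Fin (k₀+1))) i := a.2
          have hthis : (g b.1 : EuclideanSpace ℝ (Fin (k₀+1))) i =
              -(g a.1 : EuclideanSpace ℝ (Fin (k₀+1))) i := by
            rw [h, hgτ a.1 i]
          rw [hthis] at hb2
          linarith
      · rintro ⟨b, hb⟩
        obtain ⟨x, rfl⟩ := Quot.exists_rep b
        have hne : (g x : EuclideanSpace ℝ (Fin (k₀+1))) i ≠ 0 :=
          abs_ne_zero.mp (by exact hb)
        rcases lt_or_gt_of_ne hne with hneg | hpos
        · refine ⟨⟨τ x, ?_⟩, ?_⟩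
          · show 0 < (g (τ x) : EuclideanSpace ℝ (Fin (k₀+1))) i
            rw [hgτ x i]
            linarith
          · exact Subtype.ext (involQuotMk_tau x)
        · exact ⟨⟨x, hpos⟩, rfl⟩
    have heopen : IsOpenMap e := by
      intro t ht
      have h1 : IsOpen (Subtype.val '' t) := hApo.isOpenMap_subtype_val t ht
      have h2 : IsOpen (involQuotMk τ '' (Subtype.val '' t)) :=
        involQuotMk_isOpenMap hτc hτinv _ h1
      rw [hUio.isOpenEmbedding_subtypeVal.isOpen_iff_image_isOpen]
      have h3 : Subtype.val '' (e '' t) = involQuotMk τ '' (Subtype.val '' t) := by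
        rw [image_image, image_image]
      rw [h3]
      exact h2
    set homeo := Equiv.toHomeomorphOfContinuousOpen (Equiv.ofBijective e hebij) hec heopen
      with hhdef
    refine ⟨Subtype.val ∘ homeo.symm, continuous_subtype_val.comp homeo.symm.continuous, ?_⟩
    intro b
    have happ : e (homeo.symm b) = b := by
      have := homeo.apply_symm_apply b
      exact this
    show involQuotMk τ ((homeo.symm b : ↥Ap) : M) = (b : InvolQuot τ)
    exact congrArg Subtype.val happ
end Down

/-- for a connected `m`-dimensional CW complex `M` with free cellular
involution `τ`, if `secat (q : M → M/τ) = m + 1` then the `ℤ/2`-index of `(M,τ)` is `m`;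
that is, `((M,τ);ℝᵐ)` satisfies the BUP. -/
theorem stmt_17 (m : ℕ) {M : Type*} [TopologicalSpace M] [T2Space M] [ConnectedSpace M]
    (S : CWStructure M) (hdim : S.DimEq m)
    (τ : M → M) (hτc : Continuous τ) (hτinv : Function.Involutive τ)
    (hτfree : ∀ x, τ x ≠ x) (hτcell : S.Cellular τ)
    (h : secat (involQuotMk τ) = (m : ℕ∞) + 1) :
    z2Index τ = (m : ℕ∞) ∧
    BorsukUlamProperty M τ (EuclideanSpace ℝ (Fin m)) := by
  classical
  have hsecat : sInf {n : ℕ∞ | ∃ k : ℕ, n = (k : ℕ∞) ∧ ∃ U : Fin k → Set (InvolQuot τ),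
      (∀ i, IsOpen (U i)) ∧ (⋃ i, U i) = Set.univ ∧
      ∀ i, IsLocalSection (involQuotMk τ) (U i)} = (m : ℕ∞) + 1 := h
  have hSne : {n : ℕ∞ | ∃ k : ℕ, n = (k : ℕ∞) ∧ ∃ U : Fin k → Set (InvolQuot τ),
      (∀ i, IsOpen (U i)) ∧ (⋃ i, U i) = Set.univ ∧
      ∀ i, IsLocalSection (involQuotMk τ) (U i)}.Nonempty := by
    by_contra hc
    rw [not_nonempty_iff_eq_empty] at hc
    rw [hc, sInf_empty] at hsecat
    have hne : ((m : ℕ∞) + 1) ≠ ⊤ := by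
      rw [show ((m : ℕ∞) + 1) = (((m + 1 : ℕ)) : ℕ∞) by push_cast; ring]
      exact WithTop.coe_ne_top
    exact hne hsecat.symm
  have hmem := csInf_mem hSne
  rw [hsecat] at hmem
  obtain ⟨k₁, hk₁, Ucov, hUo, hUcov, hUsec⟩ := hmem
  have hk : k₁ = m + 1 := by exact_mod_cast hk₁.symm
  subst hk
  obtain ⟨Ψ, hΨc, hΨ0, hΨz, hΨp⟩ := cw_partition S (m + 1)
    (fun i => involQuotMk τ ⁻¹' (Ucov i))
    (fun i => (hUo i).preimage involQuotMk_continuous)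
    (fun x => by
      have hx : involQuotMk τ x ∈ ⋃ i, Ucov i := hUcov ▸ mem_univ _
      obtain ⟨i, hi⟩ := mem_iUnion.mp hx
      exact ⟨i, hi⟩)
  obtain ⟨g, hgc, hgeq⟩ :=
    equivariant_of_cover hτc hτinv hτfree m Ucov hUo hUsec Ψ hΨc hΨ0 hΨz hΨp
  have noeq : ∀ j : ℕ, j < m →
      ¬∃ g' : M → Sph j, Continuous g' ∧ ∀ x, g' (τ x) = antipodal j (g' x) := by
    rintro j hj ⟨g', hg'c, hg'e⟩
    obtain ⟨U', hU'o, hU'cov, hU'sec⟩ := cover_of_equivariant hτc hτinv j g' hg'c hg'e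
    have hjm : j + 1 ≤ m := hj
    have hmmem : (m : ℕ∞) ∈ {n : ℕ∞ | ∃ k : ℕ, n = (k : ℕ∞) ∧
        ∃ U : Fin k → Set (InvolQuot τ), (∀ i, IsOpen (U i)) ∧ (⋃ i, U i) = Set.univ ∧
        ∀ i, IsLocalSection (involQuotMk τ) (U i)} := by
      refine ⟨m, rfl, fun i => if hcond : (i : ℕ) < j + 1 then U' ⟨i, hcond⟩ else ∅, ?_, ?_, ?_⟩
      · intro i
        dsimp only
        split
        · exact hU'o _
        · exact isOpen_empty
      · rw [eq_univ_iff_forall]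
        intro b
        have hb : b ∈ ⋃ i, U' i := hU'cov ▸ mem_univ b
        obtain ⟨i0, hi0⟩ := mem_iUnion.mp hb
        refine mem_iUnion.mpr ⟨⟨i0.1, lt_of_lt_of_le i0.2 hjm⟩, ?_⟩
        dsimp only
        rw [dif_pos (show ((⟨i0.1, lt_of_lt_of_le i0.2 hjm⟩ : Fin m) : ℕ) < j + 1 from i0.2)]
        exact hi0
      · intro i
        dsimp only
        split
        · exact hU'sec _
        · haveI : IsEmpty ↥(∅ : Set (InvolQuot τ)) := Set.isEmpty_coe_sort.mpr rfl
          refine ⟨fun x => isEmptyElim x, ?_, fun x => isEmptyElim x⟩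
          refine continuous_def.mpr fun s _ => ?_
          rw [Set.eq_empty_of_isEmpty ((fun x => isEmptyElim x : ↥(∅ : Set (InvolQuot τ)) → M)
            ⁻¹' s)]
          exact isOpen_empty
    have hle : sInf {n : ℕ∞ | ∃ k : ℕ, n = (k : ℕ∞) ∧
        ∃ U : Fin k → Set (InvolQuot τ), (∀ i, IsOpen (U i)) ∧ (⋃ i, U i) = Set.univ ∧
        ∀ i, IsLocalSection (involQuotMk τ) (U i)} ≤ (m : ℕ∞) := sInf_le hmmem
    rw [hsecat] at hle
    have hcontra : (m + 1 : ℕ) ≤ m := by exact_mod_cast hle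
    omega
  refine ⟨?_, ?_⟩
  · apply le_antisymm
    · exact sInf_le ⟨m, rfl, g, hgc, hgeq⟩
    · refine le_sInf ?_
      rintro b ⟨j, rfl, g', hg'c, hg'e⟩
      by_contra hlt
      push_neg at hlt
      have hjm : j < m := by exact_mod_cast hlt
      exact noeq j hjm ⟨g', hg'c, hg'e⟩
  · intro f hf
    rcases Nat.eq_zero_or_pos m with hm0 | hmpos
    · subst hm0
      haveI : Subsingleton (EuclideanSpace ℝ (Fin 0)) := ⟨fun a b => PiLp.ext fun i0 => Fin.elim0 i0⟩
      exact ⟨Classical.arbitrary M, Subsingleton.elim _ _⟩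
    · obtain ⟨m', rfl⟩ : ∃ m', m = m' + 1 := ⟨m - 1, (Nat.succ_pred_eq_of_pos hmpos).symm⟩
      by_contra hno
      push_neg at hno
      set G : M → EuclideanSpace ℝ (Fin (m' + 1)) := fun x => f x - f (τ x) with hGdef
      have hGne : ∀ x, G x ≠ 0 := fun x => sub_ne_zero_of_ne (Ne.symm (hno x))
      have hGc : Continuous G := hf.sub (hf.comp hτc)
      have hGτ : ∀ x, G (τ x) = -G x := by
        intro x
        show f (τ x) - f (τ (τ x)) = -(f x - f (τ x))
        rw [hτinv x, neg_sub]
      refine noeq m' (Nat.lt_succ_self m')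
        ⟨fun x => ⟨‖G x‖⁻¹ • G x, mem_sphere_normalize _ (hGne x)⟩, ?_, ?_⟩
      · exact Continuous.subtype_mk
          (((hGc.norm).inv₀ (fun x => norm_ne_zero_iff.mpr (hGne x))).smul hGc) _
      · intro x
        unfold antipodal
        apply Subtype.ext
        rw [coe_neg_sphere]
        show ‖G (τ x)‖⁻¹ • G (τ x) = -(‖G x‖⁻¹ • G x)
        rw [hGτ x, norm_neg, smul_neg]
end
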